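/- Let ℓ : ℛ → ℝ^𝒴 be a discrete loss, let γ(p) = argmin_{r∈ℛ} ⟨p, ℓ(r)⟩, and for r ∈ ℛ let γ_r = {p ∈ Δ_𝒴 : r ∈ γ(p)} be its level set. Suppose γ is non-redundant, i.e., there are no distinct r, r' ∈ ℛ with γ_r ⊆ γ_{r'}. Then every level set γ_r is full-dimensional in Δ_𝒴: it has nonempty interior relative to the affine hull of Δ_𝒴 (the hyperplane {x ∈ ℝ^𝒴 : ∑_y x_y = 1}). -/

import Mathlib

/-- The probability simplex over a finite outcome set `Y`. -/
def probSimplex (Y : Type*) [Fintype Y] : Set (Y → ℝ) :=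
  {p | (∀ y, 0 ≤ p y) ∧ ∑ y, p y = 1}

/-- Expected loss `⟨p, v⟩ = ∑ y, p y * v y`. -/
def elloss {Y : Type*} [Fintype Y] (p : Y → ℝ) (v : Y → ℝ) : ℝ :=
  ∑ y, p y * v y

/-- `u` minimizes the expected loss `⟨p, L ·⟩` over the report set. -/
def Minimizes {U Y : Type*} [Fintype Y] (p : Y → ℝ) (L : U → Y → ℝ) (u : U) : Prop :=
  ∀ u' : U, elloss p (L u) ≤ elloss p (L u')

/-- The Bayes risk `inf_u ⟨p, L u⟩`. -/
noncomputable def bayesRisk {U Y : Type*} [Fintype Y] (p : Y → ℝ) (L : U → Y → ℝ) : ℝ :=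
  sInf (Set.range fun u => elloss p (L u))

/-- `L` embeds the discrete loss `ℓ`. -/
def Embeds {R Y : Type*} [Fintype Y] {d : ℕ}
    (L : (Fin d → ℝ) → Y → ℝ) (ℓ : R → Y → ℝ) : Prop :=
  ∃ φ : R → (Fin d → ℝ), Function.Injective φ ∧ (∀ r, L (φ r) = ℓ r) ∧
    ∀ p ∈ probSimplex Y, ∀ r, Minimizes p ℓ r ↔ Minimizes p L (φ r)

/-- A polyhedral convex function: a pointwise maximum of finitely many affine functions. -/
def IsPolyhedralFn {d : ℕ} (g : (Fin d → ℝ) → ℝ) : Prop :=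
  ∃ (m : ℕ) (a : Fin (m + 1) → Fin d → ℝ) (b : Fin (m + 1) → ℝ),
    ∀ x, g x = Finset.univ.sup' Finset.univ_nonempty (fun i => ∑ j, a i j * x j + b i)

section aux

variable {Y : Type*} [Fintype Y]

lemma elloss_combo (a b : ℝ) (x z v : Y → ℝ) :
    elloss (fun y => a * x y + b * z y) v = a * elloss x v + b * elloss z v := by
  simp only [elloss, Finset.mul_sum, ← Finset.sum_add_distrib]
  exact Finset.sum_congr rfl fun y _ => by ring

lemma sum_mul_le_of_abs_le (ε : ℝ) (w v : Y → ℝ) (hw : ∀ y, |w y| ≤ ε) :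
    ∑ y, w y * v y ≤ ε * ∑ y, |v y| := by
  rw [Finset.mul_sum]
  refine Finset.sum_le_sum fun y _ => ?_
  calc w y * v y ≤ |w y * v y| := le_abs_self _
    _ = |w y| * |v y| := abs_mul _ _
    _ ≤ ε * |v y| := mul_le_mul_of_nonneg_right (hw y) (abs_nonneg _)

end aux

/-- For a non-redundant finite property elicited by a discrete loss, every
level set `γ_r = {p ∈ Δ_𝒴 : r ∈ argmin ⟨p, ℓ ·⟩}` is full-dimensional: it has nonempty
interior relative to the affine hull `{x : ∑ y, x y = 1}` of the simplex. -/
theorem nonredundant_level_sets_full_dimensional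
    {Y R : Type*} [Fintype Y] [Nonempty Y] [Fintype R]
    (ℓ : R → Y → ℝ) (hℓ0 : ∀ r y, 0 ≤ ℓ r y)
    (hnonred : ∀ r r' : R, r ≠ r' →
      ¬ ({p ∈ probSimplex Y | Minimizes p ℓ r} ⊆ {p ∈ probSimplex Y | Minimizes p ℓ r'})) :
    ∀ r : R, ∃ p ∈ {p ∈ probSimplex Y | Minimizes p ℓ r}, ∃ ε > 0,
      ∀ q : Y → ℝ, ∑ y, q y = 1 → dist q p < ε →
        q ∈ {p ∈ probSimplex Y | Minimizes p ℓ r} := by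
  classical
  intro r
  set n : ℝ := (Fintype.card Y : ℝ) with hn
  have hnpos : 0 < n := by
    simp only [hn]
    exact_mod_cast Fintype.card_pos
  -- Step 1: find a point with positive coordinates and strict gaps.
  obtain ⟨p, hsum, hpos, hgap⟩ :
      ∃ p : Y → ℝ, ∑ y, p y = 1 ∧ (∀ y, 0 < p y) ∧
        ∀ r', r' ≠ r → elloss p (ℓ r) < elloss p (ℓ r') := by
    -- uniform distribution
    set u : Y → ℝ := fun _ => 1 / n with hu
    have husum : ∑ y, u y = 1 := by
      simp [hu, Finset.sum_const, Finset.card_univ, hn]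
    have hupos : ∀ y, 0 < u y := fun y => by positivity
    by_cases hS : ∃ r' : R, r' ≠ r
    · -- obtain points with strict gaps
      have hx : ∀ r' : R, r' ≠ r → ∃ x : Y → ℝ, x ∈ probSimplex Y ∧ Minimizes x ℓ r ∧
          elloss x (ℓ r) < elloss x (ℓ r') := by
        intro r' hr'
        have h := hnonred r r' (Ne.symm hr')
        rw [Set.not_subset] at h
        obtain ⟨x, hx1, hx2⟩ := h
        obtain ⟨hxS, hxM⟩ := hx1
        refine ⟨x, hxS, hxM, ?_⟩
        have hnm : ¬ Minimizes x ℓ r' := fun h' => hx2 ⟨hxS, h'⟩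
        simp only [Minimizes, not_forall, not_le] at hnm
        obtain ⟨u'', hu''⟩ := hnm
        exact lt_of_le_of_lt (hxM u'') hu''
      have hx' : ∀ r' : R, ∃ x : Y → ℝ, r' ≠ r →
          x ∈ probSimplex Y ∧ Minimizes x ℓ r ∧ elloss x (ℓ r) < elloss x (ℓ r') := by
        intro r'
        by_cases h : r' = r
        · exact ⟨0, fun h' => absurd h h'⟩
        · obtain ⟨x, h1, h2, h3⟩ := hx r' h
          exact ⟨x, fun _ => ⟨h1, h2, h3⟩⟩
      choose x hx0 using hx'
      set S : Finset R := Finset.univ.filter (· ≠ r) with hSdef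
      have hmemS : ∀ r' : R, r' ∈ S ↔ r' ≠ r := by
        intro r'; simp [hSdef]
      have hSne : S.Nonempty := by
        obtain ⟨r', hr'⟩ := hS
        exact ⟨r', (hmemS r').2 hr'⟩
      set k : ℝ := (S.card : ℝ) with hk
      have hkpos : 0 < k := by
        simp only [hk]
        exact_mod_cast Finset.card_pos.2 hSne
      set pb : Y → ℝ := fun y => (∑ r' ∈ S, x r' y) / k with hpb
      have hell : ∀ v : Y → ℝ, elloss pb v = (∑ r' ∈ S, elloss (x r') v) / k := by
        intro v
        simp only [elloss, hpb, Finset.sum_div]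
        rw [Finset.sum_comm]
        refine Finset.sum_congr rfl fun y _ => ?_
        rw [Finset.sum_mul]
        exact Finset.sum_congr rfl fun _ _ => by ring
      have hbsum : ∑ y, pb y = 1 := by
        simp only [hpb]
        rw [← Finset.sum_div, Finset.sum_comm]
        have : ∀ r' ∈ S, ∑ y, x r' y = 1 := fun r' hr' =>
          ((hx0 r' ((hmemS r').1 hr')).1).2
        rw [Finset.sum_congr rfl this, Finset.sum_const, nsmul_eq_mul, mul_one]
        field_simp [hk]
        exact hk.symm
      have hbnn : ∀ y, 0 ≤ pb y := by
        intro y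
        apply div_nonneg _ hkpos.le
        exact Finset.sum_nonneg fun r' hr' => ((hx0 r' ((hmemS r').1 hr')).1).1 y
      -- strict gaps at pb
      have hGpos : ∀ r'' ∈ S, 0 < elloss pb (ℓ r'') - elloss pb (ℓ r) := by
        intro r'' hr''
        rw [hell, hell, div_sub_div_same, ← Finset.sum_sub_distrib]
        apply div_pos _ hkpos
        apply Finset.sum_pos'
        · intro r' hr'
          have := (hx0 r' ((hmemS r').1 hr')).2.1 r''
          linarith
        · refine ⟨r'', hr'', ?_⟩
          have := (hx0 r'' ((hmemS r'').1 hr'')).2.2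
          linarith
      set G : R → ℝ := fun r'' => elloss pb (ℓ r'') - elloss pb (ℓ r) with hG
      set E : R → ℝ := fun r'' => elloss u (ℓ r'') - elloss u (ℓ r) with hE
      set t : ℝ := S.inf' hSne (fun r'' => G r'' / (G r'' + |E r''| + 1)) with ht
      have hdpos : ∀ r'' ∈ S, 0 < G r'' + |E r''| + 1 := by
        intro r'' hr''
        have := hGpos r'' hr''
        have := abs_nonneg (E r'')
        simp only [hG]
        linarith
      have ht0 : 0 < t := by
        rw [ht, Finset.lt_inf'_iff]
        intro r'' hr''
        exact div_pos (hGpos r'' hr'') (hdpos r'' hr'')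
      have ht1 : t < 1 := by
        rw [ht, Finset.inf'_lt_iff]
        obtain ⟨r'', hr''⟩ := hSne
        refine ⟨r'', hr'', ?_⟩
        rw [div_lt_one (hdpos r'' hr'')]
        have := abs_nonneg (E r'')
        linarith
      have htle : ∀ r'' ∈ S, t * (G r'' + |E r''| + 1) ≤ G r'' := by
        intro r'' hr''
        have h1 : t ≤ G r'' / (G r'' + |E r''| + 1) := Finset.inf'_le _ hr''
        rw [le_div_iff₀ (hdpos r'' hr'')] at h1
        exact h1
      refine ⟨fun y => (1 - t) * pb y + t * u y, ?_, ?_, ?_⟩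
      · rw [Finset.sum_add_distrib, ← Finset.mul_sum, ← Finset.mul_sum, hbsum, husum]
        ring
      · intro y
        show 0 < (1 - t) * pb y + t * u y
        have h1 : 0 ≤ (1 - t) * pb y := mul_nonneg (by linarith) (hbnn y)
        have h2 : 0 < t * u y := mul_pos ht0 (hupos y)
        linarith
      · intro r' hr'
        have hr'S : r' ∈ S := (hmemS r').2 hr'
        rw [elloss_combo, elloss_combo]
        have hGr : 0 < G r' := hGpos r' hr'S
        have h2 : t * (G r' + |E r'| + 1) ≤ G r' := htle r' hr'S
        have h3 : -(t * |E r'|) ≤ t * E r' := by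
          have := mul_le_mul_of_nonneg_left (neg_abs_le (E r')) ht0.le
          linarith [this]
        have hGE : elloss pb (ℓ r') = elloss pb (ℓ r) + G r' := by simp [hG]
        have hEE : elloss u (ℓ r') = elloss u (ℓ r) + E r' := by simp [hE]
        rw [hGE, hEE]
        nlinarith [ht0, hGr, h2, h3]
    · -- R has only the element r
      push_neg at hS
      refine ⟨u, husum, hupos, fun r' hr' => absurd (hS r') hr'⟩
  -- Step 2: conclude from p.
  have hpS : p ∈ probSimplex Y := ⟨fun y => (hpos y).le, hsum⟩
  have hpM : Minimizes p ℓ r := by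
    intro u'
    by_cases h : u' = r
    · subst h; exact le_rfl
    · exact (hgap u' h).le
  refine ⟨p, ⟨hpS, hpM⟩, ?_⟩
  set c : ℝ := Finset.univ.inf' Finset.univ_nonempty p with hc
  have hc0 : 0 < c := by
    rw [hc, Finset.lt_inf'_iff]
    exact fun y _ => hpos y
  have hcle : ∀ y, c ≤ p y := fun y => Finset.inf'_le _ (Finset.mem_univ y)
  set f : R → ℝ := fun r' =>
    (elloss p (ℓ r') - elloss p (ℓ r)) / (∑ y, |ℓ r y - ℓ r' y| + 1) with hf
  set F : R → ℝ := fun r' => if r' = r then c else min c (f r') with hF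
  set ε : ℝ := Finset.univ.inf' (Finset.univ_nonempty_iff.mpr ⟨r⟩) F with hε
  have hBnn : ∀ r' : R, (0:ℝ) ≤ ∑ y, |ℓ r y - ℓ r' y| :=
    fun r' => Finset.sum_nonneg fun y _ => abs_nonneg _
  have hfpos : ∀ r', r' ≠ r → 0 < f r' := by
    intro r' hr'
    apply div_pos (by linarith [hgap r' hr']) (by linarith [hBnn r'])
  have hε0 : 0 < ε := by
    rw [hε, Finset.lt_inf'_iff]
    intro r' _
    simp only [hF]
    split
    · exact hc0
    · exact lt_min hc0 (hfpos r' (by assumption))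
  have hεc : ε ≤ c := by
    have h1 := Finset.inf'_le F (Finset.mem_univ r)
    rw [← hε] at h1
    simp only [hF, if_pos rfl] at h1
    exact h1
  refine ⟨ε, hε0, ?_⟩
  intro q hqsum hqd
  have hqy : ∀ y, |q y - p y| < ε := by
    intro y
    calc |q y - p y| = dist (q y) (p y) := (Real.dist_eq _ _).symm
      _ ≤ dist q p := dist_le_pi_dist q p y
      _ < ε := hqd
  have hqnn : ∀ y, 0 ≤ q y := by
    intro y
    have h1 := hqy y
    have h2 := abs_lt.mp h1
    have := hcle y
    linarith [h2.1]
  refine ⟨⟨hqnn, hqsum⟩, ?_⟩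
  intro u'
  by_cases h : u' = r
  · subst h; exact le_rfl
  · -- show elloss q (ℓ r) ≤ elloss q (ℓ u')
    have hεf : ε ≤ f u' := by
      have h1 := Finset.inf'_le F (Finset.mem_univ u')
      rw [← hε] at h1
      simp only [hF, if_neg h] at h1
      exact h1.trans (min_le_right _ _)
    set B : ℝ := ∑ y, |ℓ r y - ℓ u' y| with hB
    set g : ℝ := elloss p (ℓ u') - elloss p (ℓ r) with hg
    have hg0 : 0 < g := by simp only [hg]; linarith [hgap u' h]
    have hεB : ε * (B + 1) ≤ g := by
      have := (le_div_iff₀ (by linarith [hBnn u'] : (0:ℝ) < B + 1)).mp hεf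
      simpa [hB, hg] using this
    have key : ∑ y, (q y - p y) * (ℓ r y - ℓ u' y) ≤ ε * B := by
      exact sum_mul_le_of_abs_le ε _ _ fun y => (hqy y).le
    have hsplit : elloss q (ℓ r) - elloss q (ℓ u')
        = (elloss p (ℓ r) - elloss p (ℓ u')) + ∑ y, (q y - p y) * (ℓ r y - ℓ u' y) := by
      simp only [elloss, ← Finset.sum_sub_distrib, ← Finset.sum_add_distrib]
      exact Finset.sum_congr rfl fun y _ => by ring
    have hb0 : 0 ≤ B := hBnn u'
    nlinarith [hsplit, key, hεB, hg0, hε0, hb0]
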